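/- arXiv:1207.2740 — 2 statements merged into one kernel-verified Lean document; each statement's English description precedes it below -/
import Mathlib

section
/- Under the same setup, for any parameter values θ, ζ, the contrast function H(X(n); ζ) evaluated on a sample generated under θ converges almost surely to N(θ,ζ) = ∬_S [T_θ([a,b]) − T_ζ([a,b])]² W(a,b) da db as n → ∞. -/
open scoped Classical

open MeasureTheory ProbabilityTheory Filter

/-- Under data generated by parameter `θ` (i.i.d. intervals with hitting
function `T`), the contrast function at another parameter `ζ`,
`H(X(n); ζ) = ∬_S [T_ζ([a,b]) − T̂([a,b];X(n))]² W(a,b) da db`,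
converges almost surely to `N(θ,ζ) = ∬_S [T_θ − T_ζ]² W`. -/
theorem stmt11 {Ω : Type*} [MeasureSpace Ω] (P : Measure Ω) [IsProbabilityMeasure P]
    (Z : ℕ → Ω → ℝ × ℝ) (hmeas : ∀ i, Measurable (Z i))
    (hle : ∀ i ω, (Z i ω).1 ≤ (Z i ω).2)
    (hindep : Pairwise fun i j => IndepFun (Z i) (Z j) P)
    (hident : ∀ i, IdentDistrib (Z i) (Z 0) P P)
    (S : Set (ℝ × ℝ)) (hS : MeasurableSet S) (hSfin : volume S < ⊤)
    (W : ℝ × ℝ → ℝ) (hWmeas : Measurable W) (C : ℝ)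
    (hW : ∀ p, 0 < W p ∧ W p < C)
    (Tθ : ℝ × ℝ → ℝ)
    (hTθ : Tθ = fun p =>
      (P {ω | (Set.Icc p.1 p.2 ∩ Set.Icc (Z 0 ω).1 (Z 0 ω).2).Nonempty}).toReal)
    (Tζ : ℝ × ℝ → ℝ) (hTζmeas : Measurable Tζ) (hTζrange : ∀ p, Tζ p ∈ Set.Icc (0:ℝ) 1)
    (That : ℕ → Ω → ℝ × ℝ → ℝ)
    (hThat : That = fun n ω p =>
      (∑ i ∈ Finset.range n,
        (if (Set.Icc p.1 p.2 ∩ Set.Icc (Z i ω).1 (Z i ω).2).Nonempty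
          then (1 : ℝ) else 0)) / n) :
    ∀ᵐ ω ∂P, Tendsto
      (fun n : ℕ => ∫ p in S, (Tζ p - That n ω p) ^ 2 * W p)
      atTop (nhds (∫ p in S, (Tθ p - Tζ p) ^ 2 * W p)) := by
  set ν : Measure (ℝ × ℝ) := volume.restrict S with hνdef
  haveI : IsFiniteMeasure ν := by
    constructor
    rw [hνdef, Measure.restrict_apply_univ]
    exact hSfin
  -- basic characterization of the hit event
  have hhit : ∀ (p x : ℝ × ℝ), (Set.Icc p.1 p.2 ∩ Set.Icc x.1 x.2).Nonempty ↔
      max p.1 x.1 ≤ min p.2 x.2 := by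
    intro p x; rw [Set.Icc_inter_Icc, Set.nonempty_Icc]
  -- the joint hit set (first coordinate = p, second = interval x)
  have hjoint : MeasurableSet {r : (ℝ × ℝ) × (ℝ × ℝ) | max r.1.1 r.2.1 ≤ min r.1.2 r.2.2} := by
    apply measurableSet_le <;> fun_prop
  -- measurability of the hit events for each i, jointly in (ω, p)
  have hsetmeas : ∀ i, MeasurableSet {q : Ω × (ℝ × ℝ) |
      (Set.Icc q.2.1 q.2.2 ∩ Set.Icc (Z i q.1).1 (Z i q.1).2).Nonempty} := by
    intro i
    have h1 : {q : Ω × (ℝ × ℝ) |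
        (Set.Icc q.2.1 q.2.2 ∩ Set.Icc (Z i q.1).1 (Z i q.1).2).Nonempty}
        = (fun q : Ω × (ℝ × ℝ) => (q.2, Z i q.1)) ⁻¹'
          {r : (ℝ × ℝ) × (ℝ × ℝ) | max r.1.1 r.2.1 ≤ min r.1.2 r.2.2} := by
      ext q; simp [hhit]
    rw [h1]
    exact (measurable_snd.prodMk ((hmeas i).comp measurable_fst)) hjoint
  -- joint measurability of That n
  have hThatmeas : ∀ n, Measurable (fun q : Ω × (ℝ × ℝ) => That n q.1 q.2) := by
    intro n
    rw [hThat]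
    apply Measurable.div_const
    apply Finset.measurable_sum
    intro i _
    exact Measurable.ite (hsetmeas i) measurable_const measurable_const
  -- Tθ in terms of the law of Z 0
  set μ0 : Measure (ℝ × ℝ) := Measure.map (Z 0) P with hμ0
  haveI : IsProbabilityMeasure μ0 := Measure.isProbabilityMeasure_map (hmeas 0).aemeasurable
  have hsec : ∀ p : ℝ × ℝ, MeasurableSet {x : ℝ × ℝ | max p.1 x.1 ≤ min p.2 x.2} := by
    intro p; apply measurableSet_le <;> fun_prop
  have hTθeq : ∀ p, Tθ p = (μ0 (Prod.mk p ⁻¹'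
      {r : (ℝ × ℝ) × (ℝ × ℝ) | max r.1.1 r.2.1 ≤ min r.1.2 r.2.2})).toReal := by
    intro p
    rw [hTθ]
    simp only
    congr 1
    rw [hμ0, Measure.map_apply (hmeas 0) (by exact measurable_prodMk_left hjoint)]
    congr 1
    ext ω
    simp [hhit]
  have hTθmeas : Measurable Tθ := by
    have h := (measurable_measure_prodMk_left (ν := μ0) hjoint).ennreal_toReal
    have : Tθ = fun p => (μ0 (Prod.mk p ⁻¹'
        {r : (ℝ × ℝ) × (ℝ × ℝ) | max r.1.1 r.2.1 ≤ min r.1.2 r.2.2})).toReal :=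
      funext hTθeq
    rw [this]; exact h
  -- SLLN at each fixed p
  have hSLLN : ∀ p : ℝ × ℝ, ∀ᵐ ω ∂P,
      Tendsto (fun n : ℕ => That n ω p) atTop (nhds (Tθ p)) := by
    intro p
    set f : ℝ × ℝ → ℝ := fun x => if max p.1 x.1 ≤ min p.2 x.2 then (1:ℝ) else 0 with hf
    have hfmeas : Measurable f :=
      Measurable.ite (hsec p) measurable_const measurable_const
    set Y : ℕ → Ω → ℝ := fun i ω =>
      if (Set.Icc p.1 p.2 ∩ Set.Icc (Z i ω).1 (Z i ω).2).Nonempty then (1:ℝ) else 0 with hY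
    have hYf : ∀ i, Y i = f ∘ Z i := by
      intro i; funext ω; simp only [hY, hf, Function.comp_apply, hhit]
    have hYmeas : Measurable (Y 0) := by rw [hYf 0]; exact hfmeas.comp (hmeas 0)
    have hint : Integrable (Y 0) P := by
      refine Integrable.mono' (integrable_const (1:ℝ)) hYmeas.aestronglyMeasurable ?_
      filter_upwards with ω
      simp only [hY]
      split <;> simp
    have hindepY : Pairwise (Function.onFun (IndepFun · · P) Y) := by
      intro i j hij
      simp only [Function.onFun, hYf i, hYf j]
      exact (hindep hij).comp hfmeas hfmeas
    have hidentY : ∀ i, IdentDistrib (Y i) (Y 0) P P := by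
      intro i
      rw [hYf i, hYf 0]
      exact (hident i).comp hfmeas
    have hE : (∫ ω, Y 0 ω ∂P) =
        (P {ω | (Set.Icc p.1 p.2 ∩ Set.Icc (Z 0 ω).1 (Z 0 ω).2).Nonempty}).toReal := by
      have hA : MeasurableSet {ω | (Set.Icc p.1 p.2 ∩ Set.Icc (Z 0 ω).1 (Z 0 ω).2).Nonempty} := by
        have : {ω | (Set.Icc p.1 p.2 ∩ Set.Icc (Z 0 ω).1 (Z 0 ω).2).Nonempty}
            = Z 0 ⁻¹' {x | max p.1 x.1 ≤ min p.2 x.2} := by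
          ext ω; simp [hhit]
        rw [this]; exact (hmeas 0) (hsec p)
      have h0 : Y 0 = Set.indicator
          {ω | (Set.Icc p.1 p.2 ∩ Set.Icc (Z 0 ω).1 (Z 0 ω).2).Nonempty} (1 : Ω → ℝ) := by
        funext ω
        simp only [hY, Set.indicator_apply, Set.mem_setOf_eq, Pi.one_apply]
      rw [h0, integral_indicator_one hA, measureReal_def]
    have := strong_law_ae_real Y hint hindepY hidentY
    filter_upwards [this] with ω hω
    have hgoal : (fun n : ℕ => That n ω p)
        = fun n : ℕ => (∑ i ∈ Finset.range n, Y i ω) / (n : ℝ) := by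
      funext n
      simp only [hThat, hY]
    have hT : Tθ p = ∫ ω, Y 0 ω ∂P := by rw [hE, hTθ]
    rw [hgoal, hT]
    exact hω
  -- swap quantifiers using Fubini
  have hmeasT : MeasurableSet {q : Ω × (ℝ × ℝ) |
      Tendsto (fun n : ℕ => That n q.1 q.2) atTop (nhds (Tθ q.2))} :=
    measurableSet_tendsto_fun (fun n => hThatmeas n) (hTθmeas.comp measurable_snd)
  have hswap : ∀ᵐ ω ∂P, ∀ᵐ p ∂ν,
      Tendsto (fun n : ℕ => That n ω p) atTop (nhds (Tθ p)) := by
    rw [Measure.ae_ae_comm hmeasT]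
    exact ae_of_all _ fun p => hSLLN p
  -- bounds for That
  have hThatbd : ∀ n ω p, That n ω p ∈ Set.Icc (0:ℝ) 1 := by
    intro n ω p
    rw [hThat]
    constructor
    · apply div_nonneg _ (Nat.cast_nonneg n)
      apply Finset.sum_nonneg
      intro i _; split <;> norm_num
    · apply div_le_one_of_le₀
      · calc (∑ i ∈ Finset.range n,
            (if (Set.Icc p.1 p.2 ∩ Set.Icc (Z i ω).1 (Z i ω).2).Nonempty
              then (1 : ℝ) else 0))
            ≤ ∑ i ∈ Finset.range n, (1:ℝ) := by
              apply Finset.sum_le_sum; intro i _; split <;> norm_num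
          _ = n := by simp
      · exact Nat.cast_nonneg n
  -- conclude by dominated convergence
  filter_upwards [hswap] with ω hω
  have hmeasp : ∀ n, Measurable (fun p => That n ω p) :=
    fun n => (hThatmeas n).comp measurable_prodMk_left
  have key : Tendsto (fun n : ℕ => ∫ p, (Tζ p - That n ω p) ^ 2 * W p ∂ν)
      atTop (nhds (∫ p, (Tζ p - Tθ p) ^ 2 * W p ∂ν)) := by
    apply tendsto_integral_of_dominated_convergence (fun _ => C)
    · intro n
      exact (((hTζmeas.sub (hmeasp n)).pow measurable_const).mul hWmeas).aestronglyMeasurable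
    · exact integrable_const C
    · intro n
      filter_upwards with p
      have h1 : |Tζ p - That n ω p| ≤ 1 := by
        rcases hTζrange p with ⟨ha, hb⟩
        rcases hThatbd n ω p with ⟨hc, hd⟩
        rw [abs_le]; constructor <;> linarith
      have h2 : (Tζ p - That n ω p) ^ 2 ≤ 1 := by
        calc (Tζ p - That n ω p) ^ 2 = |Tζ p - That n ω p| ^ 2 := (sq_abs _).symm
          _ ≤ 1 ^ 2 := by gcongr
          _ = 1 := one_pow 2
      have h3 : |(Tζ p - That n ω p) ^ 2 * W p| = (Tζ p - That n ω p) ^ 2 * W p :=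
        abs_of_nonneg (mul_nonneg (sq_nonneg _) (hW p).1.le)
      rw [Real.norm_eq_abs, h3]
      calc (Tζ p - That n ω p) ^ 2 * W p ≤ 1 * C :=
            mul_le_mul h2 (hW p).2.le (hW p).1.le zero_le_one
        _ = C := one_mul C
    · filter_upwards [hω] with p hp
      exact ((tendsto_const_nhds.sub hp).pow 2).mul tendsto_const_nhds
  have hrw : (fun p => (Tθ p - Tζ p) ^ 2 * W p) = fun p => (Tζ p - Tθ p) ^ 2 * W p := by
    funext p; ring
  rw [show (∫ p in S, (Tθ p - Tζ p) ^ 2 * W p) = ∫ p, (Tζ p - Tθ p) ^ 2 * W p ∂ν by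
    rw [hrw]]
  exact key
end

section
/- Let Θ ⊂ ℝ^p be compact with θ_0 an interior point, and let M(X(n); θ) be a family of contrast functions: for all θ, ζ ∈ Θ, M(X(n); ζ) → N(θ, ζ) almost surely under P_θ, and N(θ,θ) < N(θ,ζ) for ζ ≠ θ. Suppose additionally that for almost every sample path, the functions θ ↦ M(X(n); θ), n = 1, 2, …, are equicontinuous. Then any sequence of minimum contrast estimators θ̂_n (measurable minimizers of M(X(n); ·) over Θ) converges to θ_0 almost surely. -/
open MeasureTheory Filter

/-- Strong consistency of the minimum contrast estimator: if `M(X(n);·)` is a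
family of contrast functions (a.s. converging pointwise to `N(θ₀,·)`, which has
a strict unique minimum at `θ₀`), `Θ` is compact with `θ₀` an interior point,
and the sample paths `θ ↦ M(X(n);θ)` are a.s. equicontinuous, then any sequence
of minimum contrast estimators converges to `θ₀` almost surely. -/
theorem stmt13 {Ω : Type*} [MeasureSpace Ω] (P : Measure Ω) [IsProbabilityMeasure P]
    (p : ℕ) (Θ : Set (Fin p → ℝ)) (hΘ : IsCompact Θ)
    (θ0 : Fin p → ℝ) (hθ0 : θ0 ∈ interior Θ)
    (M : ℕ → Ω → (Fin p → ℝ) → ℝ) (N : (Fin p → ℝ) → ℝ)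
    (hMmeas : ∀ n θ, Measurable (fun ω => M n ω θ))
    (hconv : ∀ ζ ∈ Θ, ∀ᵐ ω ∂P, Tendsto (fun n => M n ω ζ) atTop (nhds (N ζ)))
    (hmin : ∀ ζ ∈ Θ, ζ ≠ θ0 → N θ0 < N ζ)
    (hequi : ∀ᵐ ω ∂P, EquicontinuousOn (fun n => M n ω) Θ)
    (θhat : ℕ → Ω → (Fin p → ℝ))
    (hθhatmeas : ∀ n, Measurable (θhat n))
    (hmem : ∀ n ω, θhat n ω ∈ Θ)
    (hargmin : ∀ n ω, ∀ θ ∈ Θ, M n ω (θhat n ω) ≤ M n ω θ) :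
    ∀ᵐ ω ∂P, Tendsto (fun n => θhat n ω) atTop (nhds θ0) := by
  have hθ0Θ : θ0 ∈ Θ := interior_subset hθ0
  -- countable dense subset of Θ
  obtain ⟨D, hDΘ, hDcount, hDdense⟩ := EMetric.subset_countable_closure_of_compact hΘ
  -- the good event
  have hG : ∀ᵐ ω ∂P, (EquicontinuousOn (fun n => M n ω) Θ ∧
      Tendsto (fun n => M n ω θ0) atTop (nhds (N θ0))) ∧
      ∀ d ∈ D, Tendsto (fun n => M n ω d) atTop (nhds (N d)) := by
    refine (hequi.and (hconv θ0 hθ0Θ)).and ?_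
    exact (ae_ball_iff hDcount).2 fun d hd => hconv d (hDΘ hd)
  -- Key fact about N: it can be approximated from D near any point of Θ
  have hA : ∀ ζ ∈ Θ, ∀ ε > (0:ℝ), ∀ U ∈ nhdsWithin ζ Θ,
      ∃ d ∈ D, d ∈ U ∧ |N d - N ζ| ≤ ε := by
    intro ζ hζ ε hε U hU
    -- pick a good ω where convergence holds at ζ and on D, with equicontinuity
    obtain ⟨ω, ⟨⟨hEω, -⟩, hDω⟩, hζω⟩ := (hG.and (hconv ζ hζ)).exists
    have hEζ := hEω ζ hζ
    have hS : ∀ᶠ θ in nhdsWithin ζ Θ, ∀ n, dist (M n ω ζ) (M n ω θ) < ε :=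
      hEζ _ (Metric.dist_mem_uniformity hε)
    -- find a suitable point d of D
    obtain ⟨W, hWopen, hζW, hWsub⟩ := mem_nhdsWithin.1 (hS.and (eventually_of_mem hU fun θ hθ => hθ))
    have hDW : (W ∩ D).Nonempty := by
      have : ζ ∈ closure D := hDdense hζ
      exact mem_closure_iff.1 this W hWopen hζW
    obtain ⟨d, hdW, hdD⟩ := hDW
    have hd : (∀ n, dist (M n ω ζ) (M n ω d) < ε) ∧ d ∈ U :=
      hWsub ⟨hdW, hDΘ hdD⟩
    refine ⟨d, hdD, hd.2, ?_⟩
    have h1 : Tendsto (fun n => |M n ω d - M n ω ζ|) atTop (nhds |N d - N ζ|) :=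
      ((hDω d hdD).sub hζω).abs
    have h2 : ∀ n, |M n ω d - M n ω ζ| ≤ ε := fun n => by
      have := hd.1 n
      rw [Real.dist_eq, abs_sub_comm] at this
      exact this.le
    exact le_of_tendsto h1 (Eventually.of_forall h2)
  -- deterministic part
  filter_upwards [hG] with ω hω
  obtain ⟨⟨hEω, hθ0ω⟩, hDω⟩ := hω
  apply tendsto_of_subseq_tendsto
  intro ns hns
  obtain ⟨ζ, hζΘ, φ, hφ, hφtend⟩ := hΘ.tendsto_subseq (x := fun k => θhat (ns k) ω)
    (fun k => hmem _ ω)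
  refine ⟨φ, ?_⟩
  -- it suffices to show ζ = θ0
  suffices hζ : ζ = θ0 by
    simpa [hζ, Function.comp_def] using hφtend
  by_contra hne
  have key : N ζ ≤ N θ0 := by
    have h3 : ∀ ε > (0:ℝ), N ζ ≤ N θ0 + 3 * ε := by
      intro ε hε
      have hS : ∀ᶠ θ in nhdsWithin ζ Θ, ∀ n, dist (M n ω ζ) (M n ω θ) < ε :=
        hEω ζ hζΘ _ (Metric.dist_mem_uniformity hε)
      obtain ⟨d, hdD, hdS, hdN⟩ := hA ζ hζΘ ε hε _ hS
      -- the subsequence eventually lies in the neighborhood where hS holds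
      have htendW : Tendsto (fun k => θhat (ns (φ k)) ω) atTop (nhdsWithin ζ Θ) := by
        apply tendsto_nhdsWithin_of_tendsto_nhds_of_eventually_within _ hφtend
        exact Eventually.of_forall fun k => hmem _ ω
      have hev : ∀ᶠ k in atTop, ∀ n, dist (M n ω ζ) (M n ω (θhat (ns (φ k)) ω)) < ε :=
        htendW.eventually hS
      have hcomp : Tendsto (fun k => ns (φ k)) atTop atTop := hns.comp hφ.tendsto_atTop
      -- M_(m) d ≤ M_(m) θ0 + 2ε eventually along m = ns ∘ φ
      have hineq : ∀ᶠ k in atTop,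
          M (ns (φ k)) ω d ≤ M (ns (φ k)) ω θ0 + 2 * ε := by
        filter_upwards [hev] with k hk
        set m := ns (φ k)
        have hdd : M m ω d ≤ M m ω ζ + ε := by
          have := hdS m
          rw [Real.dist_eq] at this
          linarith [(abs_le.1 this.le).1]
        have hzz : M m ω ζ ≤ M m ω (θhat m ω) + ε := by
          have := hk m
          rw [Real.dist_eq] at this
          linarith [(abs_le.1 this.le).2]
        have hmm : M m ω (θhat m ω) ≤ M m ω θ0 := hargmin m ω θ0 hθ0Θ
        linarith
      have hl : Tendsto (fun k => M (ns (φ k)) ω d) atTop (nhds (N d)) :=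
        (hDω d hdD).comp hcomp
      have hr : Tendsto (fun k => M (ns (φ k)) ω θ0 + 2 * ε) atTop (nhds (N θ0 + 2 * ε)) :=
        (hθ0ω.comp hcomp).add tendsto_const_nhds
      have hdle : N d ≤ N θ0 + 2 * ε := le_of_tendsto_of_tendsto hl hr hineq
      have := (abs_le.1 hdN).1
      linarith
    by_contra hlt
    push_neg at hlt
    obtain ⟨ε, hε, hεlt⟩ : ∃ ε > (0:ℝ), N θ0 + 3 * ε < N ζ :=
      ⟨(N ζ - N θ0) / 4, by linarith, by linarith⟩
    exact absurd (h3 ε hε) (not_le.2 hεlt)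
  exact absurd key (not_le.2 (hmin ζ hζΘ hne))
end
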